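/- arXiv:2302.00834 — 3 statements merged into one kernel-verified Lean document; each statement's English description precedes it below -/
import Mathlib

section
/- Let σ(x) = max(0,x) be the ReLU activation and let W = (w_1,…,w_L) be a vector of positive integer widths. Let f ∈ Υ^W(ℝ), and let x_0 < x_1 < ⋯ < x_M be real numbers such that sign(f(x_i)) ≠ sign(f(x_{i+1})) for i = 0,…,M−1. Then M ≤ 3 · ∏_{i=1}^L (2 w_i). -/
noncomputable def sgn (x : ℝ) : ℝ := if 0 ≤ x then 1 else -1

/-- The hidden part of a feedforward network with widths `W`:
`σ ∘ A_{L-1} ∘ σ ∘ ⋯ ∘ σ ∘ A_0`, where `σ` acts coordinatewise. -/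
inductive IsHidden (σ : ℝ → ℝ) : (n : ℕ) → List ℕ → (m : ℕ) → ((Fin n → ℝ) → (Fin m → ℝ)) → Prop
  | nil (n : ℕ) : IsHidden σ n [] n id
  | cons {n m k : ℕ} {W : List ℕ} (M : Matrix (Fin m) (Fin n) ℝ) (b : Fin m → ℝ)
      {g : (Fin m → ℝ) → (Fin k → ℝ)} :
      IsHidden σ m W k g →
      IsHidden σ n (m :: W) k (fun x => g (fun j => σ (M.mulVec x j + b j)))

/-- The class `Υ^W(ℝ^d)` of networks `A_L ∘ σ ∘ A_{L-1} ∘ σ ∘ ⋯ ∘ σ ∘ A_0`. -/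
def NNclass (σ : ℝ → ℝ) (d : ℕ) (W : List ℕ) : Set ((Fin d → ℝ) → ℝ) :=
  {f | ∃ (m : ℕ) (g : (Fin d → ℝ) → (Fin m → ℝ)) (M : Matrix (Fin 1) (Fin m) ℝ) (b : ℝ),
        IsHidden σ d W m g ∧ ∀ x, f x = M.mulVec (g x) 0 + b}

/-- `Σ_{i=1}^{L-1} w_{i+1} w_i` for the list of widths. -/
def consecSum : List ℕ → ℕ
  | w1 :: w2 :: rest => w2 * w1 + consecSum (w2 :: rest)
  | _ => 0

/-- The number of parameters `P(W) = w_L + d w_1 + 1 + Σ_{i=1}^{L-1} w_{i+1} w_i + Σ_{i=1}^L w_i`. -/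
def numParams (d : ℕ) (W : List ℕ) : ℕ :=
  W.getLastD 0 + d * W.headI + 1 + consecSum W + W.sum

/-- `σ` is piecewise polynomial with `p` pieces, each of degree at most `D`:
there are breakpoints `c_1 < ⋯ < c_{p-1}` and polynomials `q_1, …, q_p` of degree `≤ D`
with `σ = q_i` on `[c_{i-1}, c_i)` (where `c_0 = -∞`, `c_p = ∞`). -/
def IsPiecewisePoly (σ : ℝ → ℝ) (p D : ℕ) : Prop :=
  0 < p ∧ ∃ (c : Fin (p - 1) → ℝ) (q : Fin p → Polynomial ℝ),
    StrictMono c ∧ (∀ i, (q i).natDegree ≤ D) ∧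
    ∀ (x : ℝ) (i : Fin p),
      (∀ j : Fin (p - 1), (j : ℕ) < (i : ℕ) → c j ≤ x) →
      (∀ j : Fin (p - 1), (i : ℕ) ≤ (j : ℕ) → x < c j) →
      σ x = (q i).eval x

/-- `g` is piecewise polynomial with at most `P` pieces, each of degree at most `D`. -/
def PiecewisePolyAtMost (g : ℝ → ℝ) (P D : ℕ) : Prop :=
  ∃ p ≤ P, IsPiecewisePoly g p D

/-- The class `Υ^W(ℝ)` of networks on a one-dimensional input. -/
def NNclass1 (σ : ℝ → ℝ) (W : List ℕ) : Set (ℝ → ℝ) :=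
  {f | ∃ F ∈ NNclass σ 1 W, ∀ t : ℝ, f t = F (fun _ => t)}

/-- `f` has at most `M` sign changes. -/
def AtMostSignChanges (f : ℝ → ℝ) (M : ℕ) : Prop :=
  ¬ ∃ x : Fin (M + 2) → ℝ, StrictMono x ∧
      ∀ i : Fin (M + 1), sgn (f (x i.castSucc)) ≠ sgn (f (x i.succ))

/-- `φ` is continuous and affine on every open interval disjoint from `s`. -/
def PLon (φ : ℝ → ℝ) (s : Finset ℝ) : Prop :=
  Continuous φ ∧ ∀ u v : ℝ, (∀ c ∈ s, ¬ (u < c ∧ c < v)) →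
    ∃ a b : ℝ, ∀ t : ℝ, u < t → t < v → φ t = a * t + b


lemma affine_Icc {φ : ℝ → ℝ} (hc : Continuous φ) {u v a b : ℝ} (huv : u < v)
    (h : ∀ t, u < t → t < v → φ t = a * t + b) :
    ∀ t, u ≤ t → t ≤ v → φ t = a * t + b := by
  have haff : Continuous (fun r : ℝ => a * r + b) :=
    (continuous_const.mul continuous_id).add continuous_const
  have hu : φ u = a * u + b := by
    have h1 : Filter.Tendsto φ (nhdsWithin u (Set.Ioi u)) (nhds (φ u)) :=
      (hc.tendsto u).mono_left nhdsWithin_le_nhds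
    have h2 : Filter.Tendsto (fun r => a * r + b) (nhdsWithin u (Set.Ioi u)) (nhds (a * u + b)) :=
      (haff.tendsto u).mono_left nhdsWithin_le_nhds
    have hev : φ =ᶠ[nhdsWithin u (Set.Ioi u)] fun r => a * r + b := by
      filter_upwards [Ioo_mem_nhdsGT_of_mem (Set.mem_Ico.mpr ⟨le_refl u, huv⟩)] with r hr
      exact h r hr.1 hr.2
    exact tendsto_nhds_unique (h1.congr' hev) h2
  have hv : φ v = a * v + b := by
    have h1 : Filter.Tendsto φ (nhdsWithin v (Set.Iio v)) (nhds (φ v)) :=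
      (hc.tendsto v).mono_left nhdsWithin_le_nhds
    have h2 : Filter.Tendsto (fun r => a * r + b) (nhdsWithin v (Set.Iio v)) (nhds (a * v + b)) :=
      (haff.tendsto v).mono_left nhdsWithin_le_nhds
    have hev : φ =ᶠ[nhdsWithin v (Set.Iio v)] fun r => a * r + b := by
      filter_upwards [Ioo_mem_nhdsLT_of_mem (Set.mem_Ioc.mpr ⟨huv, le_refl v⟩)] with r hr
      exact h r hr.1 hr.2
    exact tendsto_nhds_unique (h1.congr' hev) h2
  intro t htu htv
  rcases eq_or_lt_of_le htu with heq | htu'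
  · rw [← heq]; exact hu
  rcases eq_or_lt_of_le htv with heq | htv'
  · rw [heq]; exact hv
  exact h t htu' htv'

lemma filter_lt_card_iff {K : ℕ} {e : Fin K → ℝ} (he : StrictMono e) (v : ℝ) (j : Fin K) :
    (j : ℕ) < (Finset.univ.filter (fun j' : Fin K => e j' < v)).card ↔ e j < v := by
  constructor
  · intro h
    by_contra hv
    push_neg at hv
    have hsub : Finset.univ.filter (fun j' : Fin K => e j' < v) ⊆ Finset.Iio j := by
      intro j' hj'
      simp only [Finset.mem_filter, Finset.mem_univ, true_and] at hj'
      simp only [Finset.mem_Iio]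
      exact he.lt_iff_lt.mp (lt_of_lt_of_le hj' hv)
    have := Finset.card_le_card hsub
    rw [Fin.card_Iio] at this
    omega
  · intro h
    have hsub : Finset.Iic j ⊆ Finset.univ.filter (fun j' : Fin K => e j' < v) := by
      intro j' hj'
      simp only [Finset.mem_Iic] at hj'
      simp only [Finset.mem_filter, Finset.mem_univ, true_and]
      exact lt_of_le_of_lt (he.monotone hj') h
    have := Finset.card_le_card hsub
    rw [Fin.card_Iic] at this
    omega


lemma gap_affine {φ : ℝ → ℝ} {s : Finset ℝ} {K : ℕ} (hK : s.card = K) (hφ : PLon φ s)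
    (i : ℕ) :
    ∃ a b : ℝ, ∀ t : ℝ,
      (∀ j : Fin K, (j : ℕ) < i → s.orderEmbOfFin hK j < t) →
      (∀ j : Fin K, i ≤ (j : ℕ) → t < s.orderEmbOfFin hK j) →
      φ t = a * t + b := by
  set e : Fin K → ℝ := fun j => s.orderEmbOfFin hK j with he_def
  have he : StrictMono e := (s.orderEmbOfFin hK).strictMono
  have hmem : ∀ j, e j ∈ s := fun j => s.orderEmbOfFin_mem hK j
  have hsurj : ∀ c ∈ s, ∃ j, e j = c := by
    intro c hc
    have : c ∈ Set.range (s.orderEmbOfFin hK) := by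
      rw [Finset.range_orderEmbOfFin]; exact hc
    exact this
  obtain ⟨p, q, hpq, hp1, hp2, hq1, hq2⟩ :
      ∃ p q : ℝ, p < q ∧
        (∀ j : Fin K, (j : ℕ) < i → e j < p) ∧ (∀ j : Fin K, i ≤ (j : ℕ) → p < e j) ∧
        (∀ j : Fin K, (j : ℕ) < i → e j < q) ∧ (∀ j : Fin K, i ≤ (j : ℕ) → q < e j) := by
    rcases Nat.eq_zero_or_pos K with rfl | hK0
    · exact ⟨0, 1, by norm_num, fun j => j.elim0, fun j => j.elim0, fun j => j.elim0,
        fun j => j.elim0⟩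
    rcases Nat.eq_zero_or_pos i with rfl | hi0
    · refine ⟨e ⟨0, hK0⟩ - 2, e ⟨0, hK0⟩ - 1, by linarith, fun j hj => by omega, fun j _ => ?_,
        fun j hj => by omega, fun j _ => ?_⟩
      · have := he.monotone (show (⟨0, hK0⟩ : Fin K) ≤ j from Fin.mk_le_of_le_val (Nat.zero_le _))
        linarith
      · have := he.monotone (show (⟨0, hK0⟩ : Fin K) ≤ j from Fin.mk_le_of_le_val (Nat.zero_le _))
        linarith
    by_cases hiK : K ≤ i
    · refine ⟨e ⟨K - 1, by omega⟩ + 1, e ⟨K - 1, by omega⟩ + 2, by linarith,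
        fun j _ => ?_, fun j hj => by omega, fun j _ => ?_, fun j hj => by omega⟩
      · have := he.monotone (show j ≤ (⟨K - 1, by omega⟩ : Fin K) from by
          rw [Fin.le_def]; simp; omega)
        linarith
      · have := he.monotone (show j ≤ (⟨K - 1, by omega⟩ : Fin K) from by
          rw [Fin.le_def]; simp; omega)
        linarith
    · push_neg at hiK
      set c0 := e ⟨i - 1, by omega⟩ with hc0
      set c1 := e ⟨i, hiK⟩ with hc1
      have hd : c0 < c1 := he (by rw [Fin.lt_def]; simp; omega)
      refine ⟨c0 + (c1 - c0) / 3, c0 + 2 * (c1 - c0) / 3, by linarith,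
        fun j hj => ?_, fun j hj => ?_, fun j hj => ?_, fun j hj => ?_⟩
      · have := he.monotone (show j ≤ (⟨i - 1, by omega⟩ : Fin K) from by
          rw [Fin.le_def]; simp; omega)
        rw [← hc0] at this; linarith
      · have := he.monotone (show (⟨i, hiK⟩ : Fin K) ≤ j from by
          rw [Fin.le_def]; simpa using hj)
        rw [← hc1] at this; linarith
      · have := he.monotone (show j ≤ (⟨i - 1, by omega⟩ : Fin K) from by
          rw [Fin.le_def]; simp; omega)
        rw [← hc0] at this; linarith
      · have := he.monotone (show (⟨i, hiK⟩ : Fin K) ≤ j from by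
          rw [Fin.le_def]; simpa using hj)
        rw [← hc1] at this; linarith
  refine ⟨(φ q - φ p) / (q - p), φ p - (φ q - φ p) / (q - p) * p, ?_⟩
  intro t h1 h2
  have huv : min t p < max t q :=
    lt_of_le_of_lt (min_le_right _ _) (lt_of_lt_of_le hpq (le_max_right _ _))
  have hfree : ∀ c ∈ s, ¬ (min t p < c ∧ c < max t q) := by
    rintro c hc ⟨hcu, hcv⟩
    obtain ⟨j, rfl⟩ := hsurj c hc
    rcases lt_or_ge (j : ℕ) i with hj | hj
    · have : e j < min t p := lt_min (h1 j hj) (hp1 j hj)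
      linarith
    · have : max t q < e j := max_lt (h2 j hj) (hq2 j hj)
      linarith
  obtain ⟨a, b, hab⟩ := hφ.2 (min t p) (max t q) hfree
  have hab' := affine_Icc hφ.1 huv hab
  have hP : φ p = a * p + b :=
    hab' p (min_le_right _ _) (le_trans hpq.le (le_max_right _ _))
  have hQ : φ q = a * q + b :=
    hab' q (le_trans (min_le_right _ _) hpq.le) (le_max_right _ _)
  have hT : φ t = a * t + b := hab' t (min_le_left _ _) (le_max_left _ _)
  have hqp : q - p ≠ 0 := sub_ne_zero.mpr hpq.ne'
  rw [hT, hP, hQ]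
  field_simp
  ring

lemma PLon_combo {n : ℕ} (c : Fin n → ℝ) (d : ℝ) (h : ℝ → Fin n → ℝ) (s : Finset ℝ)
    (H : ∀ l, PLon (fun t => h t l) s) :
    PLon (fun t => (∑ l, c l * h t l) + d) s := by
  constructor
  · exact (continuous_finset_sum _ fun l _ => continuous_const.mul (H l).1).add continuous_const
  · intro u v hfree
    choose a b hab using fun l => (H l).2 u v hfree
    refine ⟨∑ l, c l * a l, (∑ l, c l * b l) + d, fun t h1 h2 => ?_⟩
    have hab' : ∀ l, h t l = a l * t + b l := fun l => hab l t h1 h2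
    have key : ∀ l, c l * h t l = c l * a l * t + c l * b l := fun l => by
      rw [hab' l]; ring
    show (∑ l, c l * h t l) + d = _
    rw [Finset.sum_congr rfl fun l _ => key l, Finset.sum_add_distrib, ← Finset.sum_mul]
    ring


lemma PLon_mulVec {m n : ℕ} (Mt : Matrix (Fin m) (Fin n) ℝ) (bb : Fin m → ℝ)
    (h : ℝ → Fin n → ℝ) (s : Finset ℝ) (H : ∀ l, PLon (fun t => h t l) s) (j : Fin m) :
    PLon (fun t => Mt.mulVec (h t) j + bb j) s := by
  have := PLon_combo (fun l => Mt j l) (bb j) h s H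
  have heq : (fun t => Mt.mulVec (h t) j + bb j)
      = fun t => (∑ l, Mt j l * h t l) + bb j := by
    funext t
    simp [Matrix.mulVec, dotProduct]
  rw [heq]
  exact this


lemma relu_layer {m n : ℕ} (Mt : Matrix (Fin m) (Fin n) ℝ) (bb : Fin m → ℝ)
    (h : ℝ → Fin n → ℝ) (s : Finset ℝ) (H : ∀ l, PLon (fun t => h t l) s) :
    ∃ s' : Finset ℝ, s'.card ≤ s.card + (s.card + 1) * m ∧
      ∀ j, PLon (fun t => max 0 (Mt.mulVec (h t) j + bb j)) s' := by
  classical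
  have hψ : ∀ j, PLon (fun t => Mt.mulVec (h t) j + bb j) s := PLon_mulVec Mt bb h s H
  have hK : s.card = s.card := rfl
  set e : Fin s.card → ℝ := fun j => s.orderEmbOfFin hK j with he_def
  have he : StrictMono e := (s.orderEmbOfFin hK).strictMono
  have hgap := fun (j : Fin m) (i : Fin (s.card + 1)) => gap_affine hK (hψ j) (i : ℕ)
  choose A B hAB using hgap
  set cross : Fin (s.card + 1) × Fin m → ℝ :=
    fun p => if A p.2 p.1 = 0 then 0 else - B p.2 p.1 / A p.2 p.1 with hcross
  refine ⟨s ∪ Finset.image cross Finset.univ, ?_, ?_⟩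
  · calc (s ∪ Finset.image cross Finset.univ).card
        ≤ s.card + (Finset.image cross Finset.univ).card := Finset.card_union_le _ _
      _ ≤ s.card + (s.card + 1) * m := by
          have := Finset.card_image_le (f := cross) (s := Finset.univ)
          simp only [Finset.card_univ, Fintype.card_prod, Fintype.card_fin] at this
          omega
  · intro j
    constructor
    · exact continuous_const.max (hψ j).1
    · intro u v hfree
      by_cases huv : u < v
      swap
      · exact ⟨0, 0, fun t h1 h2 => absurd (h1.trans h2) huv⟩
      set i : ℕ := (Finset.univ.filter (fun j' : Fin s.card => e j' < v)).card with hi_def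
      have hiK : i ≤ s.card := le_trans (Finset.card_filter_le _ _) (by simp)
      set iF : Fin (s.card + 1) := ⟨i, by omega⟩ with hiF
      have hval : ∀ t, u < t → t < v → Mt.mulVec (h t) j + bb j = A j iF * t + B j iF := by
        intro t h1 h2
        have hiFval : (iF : ℕ) = i := rfl
        refine hAB j iF t (fun j' hj' => ?_) (fun j' hj' => ?_)
        · have hjv : e j' < v := (filter_lt_card_iff he v j').mp (by omega)
          have : ¬ (u < e j' ∧ e j' < v) := by
            have := hfree (e j') (Finset.mem_union_left _ (s.orderEmbOfFin_mem hK j'))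
            exact this
          have : e j' ≤ u := by
            by_contra hcon
            push_neg at hcon
            exact this ⟨hcon, hjv⟩
          linarith
        · have hjv : ¬ e j' < v := fun hc => by
            have := (filter_lt_card_iff he v j').mpr hc
            omega
          push_neg at hjv
          linarith
      set a := A j iF
      set b := B j iF
      by_cases ha : a = 0
      · refine ⟨0, max 0 b, fun t h1 h2 => ?_⟩
        show max 0 (Mt.mulVec (h t) j + bb j) = _
        rw [hval t h1 h2, ha]
        norm_num
      · have hz : cross (iF, j) ∈ s ∪ Finset.image cross Finset.univ :=
          Finset.mem_union_right _ (Finset.mem_image.mpr ⟨(iF, j), Finset.mem_univ _, rfl⟩)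
        have hzval : cross (iF, j) = -b / a := by rw [hcross]; exact if_neg ha
        have hznot : ¬ (u < -b / a ∧ -b / a < v) := by
          have := hfree _ hz
          rwa [hzval] at this
        have haz : a * (-b / a) + b = 0 := by field_simp; ring
        rcases le_or_gt (-b / a) u with hzu | hzv'
        · rcases lt_or_gt_of_ne ha with haneg | hapos
          · refine ⟨0, 0, fun t h1 h2 => ?_⟩
            show max 0 (Mt.mulVec (h t) j + bb j) = _
            rw [hval t h1 h2]
            have : a * t + b < 0 := by nlinarith
            simp [max_eq_left this.le]
          · refine ⟨a, b, fun t h1 h2 => ?_⟩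
            show max 0 (Mt.mulVec (h t) j + bb j) = _
            rw [hval t h1 h2]
            have : 0 ≤ a * t + b := by nlinarith
            exact max_eq_right this
        · have hvz : v ≤ -b / a := by
            by_contra hcon
            push_neg at hcon
            exact hznot ⟨hzv', hcon⟩
          rcases lt_or_gt_of_ne ha with haneg | hapos
          · refine ⟨a, b, fun t h1 h2 => ?_⟩
            show max 0 (Mt.mulVec (h t) j + bb j) = _
            rw [hval t h1 h2]
            have : 0 ≤ a * t + b := by nlinarith
            exact max_eq_right this
          · refine ⟨0, 0, fun t h1 h2 => ?_⟩
            show max 0 (Mt.mulVec (h t) j + bb j) = _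
            rw [hval t h1 h2]
            have : a * t + b < 0 := by nlinarith
            simp [max_eq_left this.le]

lemma hidden_pl : ∀ {n W k g}, IsHidden (fun t : ℝ => max 0 t) n W k g →
    (∀ w ∈ W, 0 < w) →
    ∀ (h : ℝ → Fin n → ℝ) (s : Finset ℝ), (∀ l, PLon (fun t => h t l) s) →
    ∃ s' : Finset ℝ, s'.card + 1 ≤ (s.card + 1) * (W.map (fun w => 2 * w)).prod ∧
      ∀ j, PLon (fun t => g (h t) j) s' := by
  intro n W k g hg
  induction hg with
  | nil n =>
    intro _ h s H
    exact ⟨s, by simp, H⟩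
  | @cons n m k W Mt bb g hrest ih =>
    intro hpos h s H
    obtain ⟨s₁, hs₁card, hs₁⟩ := relu_layer Mt bb h s H
    have hm : 0 < m := hpos m (List.mem_cons_self)
    obtain ⟨s', hcard, hPL⟩ :=
      ih (fun w hw => hpos w (List.mem_cons_of_mem _ hw))
        (fun t j => max 0 (Mt.mulVec (h t) j + bb j)) s₁ hs₁
    refine ⟨s', ?_, hPL⟩
    have h1 : s₁.card + 1 ≤ (s.card + 1) * (2 * m) := by nlinarith
    calc s'.card + 1 ≤ (s₁.card + 1) * ((W.map fun w => 2 * w).prod) := hcard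
      _ ≤ (s.card + 1) * (2 * m) * ((W.map fun w => 2 * w).prod) :=
          Nat.mul_le_mul_right _ h1
      _ = (s.card + 1) * (((m :: W).map fun w => 2 * w).prod) := by
          simp [List.prod_cons]; ring

lemma sgn_ne_cases {A B : ℝ} (h : sgn A ≠ sgn B) :
    (0 ≤ A ∧ B < 0) ∨ (A < 0 ∧ 0 ≤ B) := by
  unfold sgn at h
  by_cases h1 : 0 ≤ A
  · by_cases h2 : 0 ≤ B
    · simp [h1, h2] at h
    · exact Or.inl ⟨h1, lt_of_not_ge h2⟩
  · by_cases h2 : 0 ≤ B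
    · exact Or.inr ⟨lt_of_not_ge h1, h2⟩
    · simp [h1, h2] at h


set_option maxHeartbeats 2000000 in
lemma count_lemma {f : ℝ → ℝ} {s : Finset ℝ} (hf : PLon f s)
    {M : ℕ} (x : Fin (M + 1) → ℝ) (hx : StrictMono x)
    (hsign : ∀ i : Fin M, sgn (f (x i.castSucc)) ≠ sgn (f (x i.succ))) :
    M ≤ 2 * s.card + 1 := by
  by_contra hM
  push_neg at hM
  set K := s.card with hK
  set y : ℕ → ℝ := fun n => x ⟨min n M, Nat.lt_succ_of_le (min_le_right _ _)⟩ with hy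
  have hymono : Monotone y := by
    intro n n' hnn
    exact hx.monotone (by simp [Fin.mk_le_mk]; omega)
  have key : ∃ n, n + 2 ≤ M ∧
      (s.filter (fun c => c < y (n + 2))).card ≤ (s.filter (fun c => c < y n)).card := by
    by_contra hcon
    push_neg at hcon
    have grow : ∀ t, 2 * t ≤ M → t ≤ (s.filter (fun c => c < y (2 * t))).card := by
      intro t
      induction t with
      | zero => intro _; exact Nat.zero_le _
      | succ t iht =>
        intro h2
        have h2' : 2 * t ≤ M := by omega
        have hstep := hcon (2 * t) (by omega)
        have hiht := iht h2'
        have heq : 2 * t + 2 = 2 * (t + 1) := by ring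
        rw [heq] at hstep
        omega
    have hg := grow (K + 1) (by omega)
    have hle : (s.filter (fun c => c < y (2 * (K + 1)))).card ≤ K := Finset.card_filter_le _ _
    omega
  obtain ⟨n, hn2, hψ⟩ := key
  have hpq : y n < y (n + 1) := hx (by simp [Fin.mk_lt_mk]; omega)
  have hqr : y (n + 1) < y (n + 2) := hx (by simp [Fin.mk_lt_mk]; omega)
  have hfree : ∀ c ∈ s, ¬ (y n < c ∧ c < y (n + 2)) := by
    rintro c hc ⟨h1, h2⟩
    have hsub : s.filter (fun c => c < y n) ⊂ s.filter (fun c => c < y (n + 2)) := by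
      refine ⟨?_, fun hback => ?_⟩
      · intro c' hc'
        rw [Finset.mem_filter] at hc' ⊢
        exact ⟨hc'.1, lt_trans hc'.2 (hpq.trans hqr)⟩
      · have hcmem : c ∈ s.filter (fun c => c < y (n + 2)) :=
          Finset.mem_filter.mpr ⟨hc, h2⟩
        have := hback hcmem
        have := (Finset.mem_filter.mp this).2
        linarith
    have := Finset.card_lt_card hsub
    omega
  obtain ⟨a, b, hab⟩ := hf.2 (y n) (y (n + 2)) hfree
  have hab' := affine_Icc hf.1 (hpq.trans hqr) hab
  have hp : f (y n) = a * y n + b := hab' _ le_rfl (hpq.trans hqr).le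
  have hq : f (y (n + 1)) = a * y (n + 1) + b := hab' _ hpq.le hqr.le
  have hr : f (y (n + 2)) = a * y (n + 2) + b := hab' _ (hpq.trans hqr).le le_rfl
  have hs1 := hsign ⟨n, by omega⟩
  have hs2 := hsign ⟨n + 1, by omega⟩
  have e1 : x (⟨n, by omega⟩ : Fin M).castSucc = y n := by
    apply congrArg x
    apply Fin.ext
    simp [Fin.castSucc]; omega
  have e2 : x (⟨n, by omega⟩ : Fin M).succ = y (n + 1) := by
    apply congrArg x
    apply Fin.ext
    simp [Fin.succ]; omega
  have e3 : x (⟨n + 1, by omega⟩ : Fin M).castSucc = y (n + 1) := by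
    apply congrArg x
    apply Fin.ext
    simp [Fin.castSucc]; omega
  have e4 : x (⟨n + 1, by omega⟩ : Fin M).succ = y (n + 2) := by
    apply congrArg x
    apply Fin.ext
    simp [Fin.succ]; omega
  rw [e1, e2, hp, hq] at hs1
  rw [e3, e4, hq, hr] at hs2
  have d1 : (0:ℝ) ≤ y (n + 1) - y n := by linarith
  have d2 : (0:ℝ) ≤ y (n + 2) - y (n + 1) := by linarith
  rcases sgn_ne_cases hs1 with ⟨ha1, ha2⟩ | ⟨ha1, ha2⟩ <;>
      rcases sgn_ne_cases hs2 with ⟨hb1, hb2⟩ | ⟨hb1, hb2⟩ <;>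
      rcases le_or_gt 0 a with haa | haa
  all_goals
    first
      | nlinarith [mul_nonneg haa d1, mul_nonneg haa d2]
      | nlinarith [mul_nonneg (neg_nonneg.mpr haa.le) d1,
          mul_nonneg (neg_nonneg.mpr haa.le) d2]

/-- A ReLU network `f ∈ Υ^W(ℝ)` has at most `3 ∏_{i=1}^L (2 w_i)`
sign changes. -/
theorem relu_network_sign_change_bound
    (W : List ℕ) (hW : W ≠ []) (hpos : ∀ w ∈ W, 0 < w)
    (f : ℝ → ℝ) (hf : f ∈ NNclass1 (fun t => max 0 t) W)
    (M : ℕ) (x : Fin (M + 1) → ℝ) (hx : StrictMono x)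
    (hsign : ∀ i : Fin M, sgn (f (x i.castSucc)) ≠ sgn (f (x i.succ))) :
    M ≤ 3 * (W.map (fun w => 2 * w)).prod := by
  obtain ⟨F, hFmem, hfF⟩ := hf
  obtain ⟨mdim, g, Mout, bout, hHidden, hF⟩ := hFmem
  have hemb : ∀ l : Fin 1, PLon (fun t : ℝ => (fun _ : Fin 1 => t) l) (∅ : Finset ℝ) :=
    fun l => ⟨continuous_id, fun u v _ => ⟨1, 0, fun t _ _ => by ring⟩⟩
  obtain ⟨s', hcard, hPL⟩ := hidden_pl hHidden hpos (fun t _ => t) ∅ hemb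
  have hfeq : f = fun t => (∑ l, Mout 0 l * g (fun _ => t) l) + bout := by
    funext t
    rw [hfF t, hF]
    simp [Matrix.mulVec, dotProduct]
  have hfPL : PLon f s' := by
    rw [hfeq]
    exact PLon_combo (fun l => Mout 0 l) bout (fun t => g (fun _ => t)) s' hPL
  have hcount := count_lemma hfPL x hx hsign
  have hP : s'.card + 1 ≤ (W.map fun w => 2 * w).prod := by simpa using hcard
  omega
end

section
/- Let N be a positive even integer, let T ≥ 2N be an even integer, and let X_T = {i/T : i = 0,…,T−1}. Let M ≥ 1 and let F be a class of functions ℝ → ℝ such that every f ∈ F has at most M sign changes. If F shatters every N-element subset of X_T, then the number of distinct sign patterns |{(sign(f(i/T)))_{i=0}^{T−1} : f ∈ F}| is at least (T/(4M))^{N/2}. -/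
lemma sgn_cases (x : ℝ) : sgn x = 1 ∨ sgn x = -1 := by
  unfold sgn; split <;> simp

lemma card_changes_le {T : ℕ} (hT : 0 < T) {f : ℝ → ℝ} {M : ℕ}
    (hf : AtMostSignChanges f M) (S : Finset ℕ)
    (hS : ∀ k ∈ S, sgn (f (((2*k : ℕ) : ℝ) / (T:ℝ))) ≠ sgn (f (((2*k+1 : ℕ) : ℝ) / (T:ℝ)))) :
    S.card ≤ M := by
  classical
  by_contra hc
  push_neg at hc
  obtain ⟨t, htS, htc⟩ := Finset.exists_subset_card_eq (show M+1 ≤ S.card by omega)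
  set e := t.orderEmbOfFin htc with he
  have heS : ∀ i, (e i) ∈ S := fun i => htS (t.orderEmbOfFin_mem htc i)
  have hTpos : (0:ℝ) < T := by exact_mod_cast hT
  set a : ℕ → ℝ := fun k => ((2*k : ℕ) : ℝ) / T with ha
  set b : ℕ → ℝ := fun k => ((2*k+1 : ℕ) : ℝ) / T with hb
  have hab : ∀ k, a k < b k := by
    intro k
    have h2 : ((2*k:ℕ):ℝ) < ((2*k+1:ℕ):ℝ) := by push_cast; linarith
    exact div_lt_div_of_pos_right h2 hTpos
  have hba : ∀ k k', k < k' → b k < a k' := by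
    intro k k' hk
    have h2 : ((2*k+1:ℕ):ℝ) < ((2*k':ℕ):ℝ) := by
      have : 2*k+1 < 2*k' := by omega
      exact_mod_cast this
    exact div_lt_div_of_pos_right h2 hTpos
  set s0 := sgn (f (a (e 0))) with hs0def
  have hs0 : s0 = 1 ∨ s0 = -1 := sgn_cases _
  have hs0ne : s0 ≠ -s0 := by rcases hs0 with h | h <;> rw [h] <;> norm_num
  set pick : ℕ → ℝ → ℝ := fun k τ => if sgn (f (a k)) = τ then a k else b k with hpick
  have hpick_lb : ∀ k τ, a k ≤ pick k τ := by
    intro k τ; simp only [hpick]; split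
    · exact le_refl _
    · exact (hab k).le
  have hpick_ub : ∀ k τ, pick k τ ≤ b k := by
    intro k τ; simp only [hpick]; split
    · exact (hab k).le
    · exact le_refl _
  have hpick_sgn : ∀ k, k ∈ S → ∀ τ : ℝ, (τ = 1 ∨ τ = -1) → sgn (f (pick k τ)) = τ := by
    intro k hk τ hτ
    have hSk : sgn (f (a k)) ≠ sgn (f (b k)) := hS k hk
    by_cases hcond : sgn (f (a k)) = τ
    · simp only [hpick, if_pos hcond]; exact hcond
    · simp only [hpick, if_neg hcond]
      rcases sgn_cases (f (b k)) with h | h <;> rcases sgn_cases (f (a k)) with h' | h' <;>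
        rcases hτ with rfl | rfl <;> first
          | exact h
          | (exact absurd h' hcond)
          | (exact absurd (h'.trans h.symm) hSk)
  -- the target signs
  set τf : ℕ → ℝ := fun j => (-1)^j * s0 with hτf
  have hτpm : ∀ j, τf j = 1 ∨ τf j = -1 := by
    intro j
    rcases Nat.even_or_odd j with hj | hj <;> rcases hs0 with h | h <;>
      simp [hτf, hj.neg_one_pow, h]
  have hτsucc : ∀ j, τf (j+1) = -τf j := by
    intro j; simp only [hτf, pow_succ]; ring
  have hτne : ∀ j, τf j ≠ τf (j+1) := by
    intro j heq
    rw [hτsucc j] at heq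
    rcases hτpm j with h | h <;> rw [h] at heq <;> norm_num at heq
  -- the sequence of points
  set x : Fin (M+2) → ℝ := fun j =>
    if h0 : j.val = 0 then a (e 0) else pick (e ⟨j.val - 1, by omega⟩) (τf j.val) with hx
  have hx_sgn : ∀ j : Fin (M+2), sgn (f (x j)) = τf j.val := by
    intro j
    simp only [hx]
    split
    · rename_i h0; rw [h0]; simp [hτf, hs0def]
    · exact hpick_sgn _ (heS _) _ (hτpm _)
  have hmono : StrictMono x := by
    rw [Fin.strictMono_iff_lt_succ]
    intro i
    have hc1 : (i.castSucc : Fin (M+2)).val = i.val := rfl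
    have hc2 : (i.succ : Fin (M+2)).val = i.val + 1 := rfl
    by_cases h0 : i.val = 0
    · have hx0 : x i.castSucc = a (e 0) := by simp only [hx, hc1, h0]; rfl
      have hx1 : x i.succ = b (e 0) := by
        simp only [hx, hc2, h0]
        have : τf 1 = -s0 := by simp [hτf]
        simp only [this]
        rw [dif_neg (by omega)]
        show (if sgn (f (a (e ⟨0+1-1, by omega⟩))) = -s0 then a (e ⟨0+1-1, by omega⟩)
          else b (e ⟨0+1-1, by omega⟩)) = b (e 0)
        have he0 : (⟨0+1-1, by omega⟩ : Fin (M+1)) = 0 := rfl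
        rw [he0, if_neg (fun hcon => hs0ne (hs0def.trans hcon))]
      rw [hx0, hx1]; exact hab _
    · obtain ⟨v, hv⟩ : ∃ v, i.val = v + 1 := ⟨i.val - 1, by omega⟩
      have hxl : x i.castSucc = pick (e ⟨v, by omega⟩) (τf (v+1)) := by
        simp only [hx, hc1, hv]; rw [dif_neg (by omega)]
        simp only [Nat.add_sub_cancel]
      have hxr : x i.succ = pick (e ⟨v+1, by omega⟩) (τf (v+2)) := by
        simp only [hx, hc2, hv]; rw [dif_neg (by omega)]
        simp only [Nat.add_sub_cancel]
      rw [hxl, hxr]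
      calc pick (e ⟨v, by omega⟩) (τf (v+1)) ≤ b (e ⟨v, by omega⟩) := hpick_ub _ _
        _ < a (e ⟨v+1, by omega⟩) := hba _ _ (by
            apply (t.orderEmbOfFin htc).strictMono
            exact Fin.mk_lt_mk.mpr (by omega))
        _ ≤ pick (e ⟨v+1, by omega⟩) (τf (v+2)) := hpick_lb _ _
  exact hf ⟨x, hmono, fun i => by
    rw [hx_sgn, hx_sgn]
    exact hτne i.val⟩

lemma exists_pair_realizer {N T s : ℕ} (hN2 : N = 2*s) (hT2 : T = 2*(T/2)) (hTpos : 0 < T)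
    (F : Set (ℝ → ℝ))
    (hshatter : ∀ x : Fin N → ℝ, Function.Injective x →
      (∀ i, ∃ j : Fin T, x i = (j : ℕ) / (T : ℝ)) →
      ∀ ε : Fin N → ℝ, (∀ i, ε i = 1 ∨ ε i = -1) →
      ∃ f ∈ F, ∀ i, sgn (f (x i)) = ε i)
    (A : Finset ℕ) (hA : A ⊆ Finset.range (T/2)) (hAc : A.card = s) :
    ∃ f ∈ F, ∀ k ∈ A, sgn (f (((2*k:ℕ):ℝ)/(T:ℝ))) = 1 ∧
      sgn (f (((2*k+1:ℕ):ℝ)/(T:ℝ))) = -1 := by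
  classical
  set e := A.orderEmbOfFin hAc with he
  have hidx : ∀ i : Fin N, i.val / 2 < s := fun i => by have := i.isLt; omega
  set m : Fin N → ℕ := fun i => 2 * e ⟨i.val/2, hidx i⟩ + i.val % 2 with hm
  have hmrange : ∀ i, m i < T := by
    intro i
    have h1 : e ⟨i.val/2, hidx i⟩ ∈ A := A.orderEmbOfFin_mem hAc _
    have h1' := hA h1
    rw [Finset.mem_range] at h1'
    
    
    have h2 : i.val % 2 < 2 := Nat.mod_lt _ two_pos
    simp only [hm]; omega

  set x : Fin N → ℝ := fun i => ((m i : ℕ):ℝ)/(T:ℝ) with hx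
  have hminj : Function.Injective m := by
    intro i j hij
    simp only [hm] at hij
    have hmod : i.val % 2 = j.val % 2 ∧
        (e ⟨i.val/2, hidx i⟩ : ℕ) = (e ⟨j.val/2, hidx j⟩ : ℕ) := by
      have h2 : i.val % 2 < 2 := Nat.mod_lt _ two_pos
      have h3 : j.val % 2 < 2 := Nat.mod_lt _ two_pos
      omega
    have hdiv : i.val / 2 = j.val / 2 := by
      have h5 := e.injective hmod.2
      exact congrArg Fin.val h5
    exact Fin.ext (by omega)
  have hTne : (T:ℝ) ≠ 0 := by positivity
  have hxinj : Function.Injective x := by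
    intro i j hij
    apply hminj
    simp only [hx] at hij
    field_simp at hij
    exact_mod_cast hij
  have hxmem : ∀ i, ∃ j : Fin T, x i = ((j:ℕ):ℝ)/(T:ℝ) := fun i => ⟨⟨m i, hmrange i⟩, rfl⟩
  set ε : Fin N → ℝ := fun i => if i.val % 2 = 0 then 1 else -1 with hε
  obtain ⟨f, hfF, hfs⟩ := hshatter x hxinj hxmem ε
    (fun i => by by_cases h : i.val % 2 = 0 <;> simp [hε, h])
  refine ⟨f, hfF, ?_⟩
  intro k hk
  obtain ⟨j, hj⟩ : ∃ j : Fin s, (e j : ℕ) = k := by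
    have : k ∈ Set.range (A.orderEmbOfFin hAc) := by
      rw [A.range_orderEmbOfFin hAc]; exact hk
    exact this
  have h1 : 2*j.val < N := by omega
  have h2 : 2*j.val + 1 < N := by omega
  constructor
  · have hx1 : x ⟨2*j.val, h1⟩ = ((2*k:ℕ):ℝ)/(T:ℝ) := by
      simp only [hx]
      congr 1
      have hmk : m ⟨2*j.val, h1⟩ = 2*k := by
        simp only [hm]
        have hfk : (⟨(2*j.val)/2, hidx ⟨2*j.val, h1⟩⟩ : Fin s) = j := by
          apply Fin.ext
          show (2*j.val)/2 = j.val
          omega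
        rw [hfk, hj]; omega
      rw [hmk]
    have hε1 : ε ⟨2*j.val, h1⟩ = 1 := by
      show (if (2*j.val) % 2 = 0 then (1:ℝ) else -1) = 1
      rw [if_pos (by omega)]
    rw [← hx1, hfs ⟨2*j.val, h1⟩, hε1]
  · have hx2 : x ⟨2*j.val+1, h2⟩ = ((2*k+1:ℕ):ℝ)/(T:ℝ) := by
      simp only [hx]
      congr 1
      have hmk : m ⟨2*j.val+1, h2⟩ = 2*k+1 := by
        simp only [hm]
        have hfk : (⟨(2*j.val+1)/2, hidx ⟨2*j.val+1, h2⟩⟩ : Fin s) = j := by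
          apply Fin.ext
          show (2*j.val+1)/2 = j.val
          omega
        rw [hfk, hj]; omega
      rw [hmk]
    have hε2 : ε ⟨2*j.val+1, h2⟩ = -1 := by
      show (if (2*j.val+1) % 2 = 0 then (1:ℝ) else -1) = -1
      rw [if_neg (by omega)]
    rw [← hx2, hfs ⟨2*j.val+1, h2⟩, hε2]

/-- If every `f ∈ F` has at most `M` sign changes and `F` shatters every
`N`-element subset of `X_T = {i/T : i = 0,…,T-1}` (with `N` even, `T ≥ 2N` even), then the
number of sign patterns realized by `F` on `X_T` is at least `(T/(4M))^{N/2}`. -/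
theorem sign_pattern_count_lower_bound
    (N T : ℕ) (hN : 0 < N) (hNe : Even N) (hTe : Even T) (hT : 2 * N ≤ T)
    (M : ℕ) (hM : 1 ≤ M) (F : Set (ℝ → ℝ))
    (hsc : ∀ f ∈ F, AtMostSignChanges f M)
    (hshatter : ∀ x : Fin N → ℝ, Function.Injective x →
      (∀ i, ∃ j : Fin T, x i = (j : ℕ) / (T : ℝ)) →
      ∀ ε : Fin N → ℝ, (∀ i, ε i = 1 ∨ ε i = -1) →
      ∃ f ∈ F, ∀ i, sgn (f (x i)) = ε i) :
    ((T : ℝ) / (4 * M)) ^ (N / 2) ≤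
      (((fun f : ℝ → ℝ => fun j : Fin T => sgn (f ((j : ℕ) / (T : ℝ)))) '' F).ncard : ℝ) := by
  classical
  set s := N / 2 with hs
  obtain ⟨n2, hn2⟩ := hNe
  obtain ⟨t2, ht2⟩ := hTe
  have hN2 : N = 2 * s := by omega
  have hT2 : T = 2 * (T / 2) := by omega
  have h4s : 4 * s ≤ T := by omega
  have hs1 : 1 ≤ s := by omega
  have hTpos : 0 < T := by omega
  set Φ : (ℝ → ℝ) → (Fin T → ℝ) :=
    fun f : ℝ → ℝ => fun j : Fin T => sgn (f ((j : ℕ) / (T : ℝ))) with hΦ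
  set P : Set (Fin T → ℝ) := Φ '' F with hP
  have hPfin : P.Finite := by
    have hbig : (Set.pi Set.univ fun _ : Fin T => ({1,-1} : Set ℝ)).Finite :=
      Set.Finite.pi (fun _ => (Set.finite_singleton (-1:ℝ)).insert 1)
    apply hbig.subset
    rintro g ⟨f, hf, rfl⟩
    rw [Set.mem_pi]
    intro j _
    rcases sgn_cases (f ((j:ℕ)/(T:ℝ))) with h | h <;> simp [hΦ, h]
  have hex : ∀ A : Finset ℕ, A ⊆ Finset.range (T/2) → A.card = s →
      ∃ f ∈ F, ∀ k ∈ A, sgn (f (((2*k:ℕ):ℝ)/(T:ℝ))) = 1 ∧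
        sgn (f (((2*k+1:ℕ):ℝ)/(T:ℝ))) = -1 :=
    fun A hA hAc => exists_pair_realizer hN2 hT2 hTpos F hshatter A hA hAc
  set fc : Finset ℕ → (ℝ → ℝ) := fun A =>
    if h : A ⊆ Finset.range (T/2) ∧ A.card = s then (hex A h.1 h.2).choose
    else fun _ => 0 with hfc
  set 𝒜 := Finset.powersetCard s (Finset.range (T/2)) with h𝒜
  have hfcF : ∀ A ∈ 𝒜, fc A ∈ F ∧ ∀ k ∈ A, sgn (fc A (((2*k:ℕ):ℝ)/(T:ℝ))) = 1 ∧
      sgn (fc A (((2*k+1:ℕ):ℝ)/(T:ℝ))) = -1 := by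
    intro A hA
    rw [h𝒜, Finset.mem_powersetCard] at hA
    simp only [hfc, dif_pos hA]
    exact (hex A hA.1 hA.2).choose_spec
  set c : Finset ℕ → (Fin T → ℝ) := fun A => Φ (fc A) with hc
  set D : (Fin T → ℝ) → Finset ℕ := fun p => (Finset.range (T/2)).filter
    (fun k => ∀ h1 : 2*k < T, ∀ h2 : 2*k+1 < T, p ⟨2*k, h1⟩ ≠ p ⟨2*k+1, h2⟩) with hD
  have hsub : ∀ A ∈ 𝒜, A ⊆ D (c A) := by
    intro A hA k hk
    have hAr := (Finset.mem_powersetCard.mp hA).1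
    have hkr := Finset.mem_range.mp (hAr hk)
    rw [hD, Finset.mem_filter]
    refine ⟨Finset.mem_range.mpr hkr, ?_⟩
    intro h1 h2 heq
    have hp := (hfcF A hA).2 k hk
    have e1 : (c A) ⟨2*k, h1⟩ = sgn (fc A (((2*k:ℕ):ℝ)/(T:ℝ))) := rfl
    have e2 : (c A) ⟨2*k+1, h2⟩ = sgn (fc A (((2*k+1:ℕ):ℝ)/(T:ℝ))) := rfl
    rw [e1, e2, hp.1, hp.2] at heq
    norm_num at heq
  have hDM : ∀ A ∈ 𝒜, (D (c A)).card ≤ M := by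
    intro A hA
    apply card_changes_le hTpos (hsc (fc A) (hfcF A hA).1)
    intro k hk heq
    rw [hD, Finset.mem_filter, Finset.mem_range] at hk
    exact hk.2 (by omega) (by omega) heq
  have hsM : s ≤ M := by
    obtain ⟨A, hAsub, hAcard⟩ := Finset.exists_subset_card_eq
      (show s ≤ (Finset.range (T/2)).card by rw [Finset.card_range]; omega)
    have hA𝒜 : A ∈ 𝒜 := by rw [h𝒜, Finset.mem_powersetCard]; exact ⟨hAsub, hAcard⟩
    calc s = A.card := hAcard.symm
      _ ≤ (D (c A)).card := Finset.card_le_card (hsub A hA𝒜)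
      _ ≤ M := hDM A hA𝒜
  have hcount : 𝒜.card ≤ Nat.choose M s * (𝒜.image c).card := by
    apply Finset.card_le_mul_card_image
    intro p hp
    obtain ⟨A0, hA0, hA0p⟩ := Finset.mem_image.mp hp
    have hfsub : (𝒜.filter (fun A => c A = p)) ⊆ (D p).powersetCard s := by
      intro A hA
      rw [Finset.mem_filter] at hA
      rw [Finset.mem_powersetCard]
      exact ⟨hA.2 ▸ hsub A hA.1, (Finset.mem_powersetCard.mp hA.1).2⟩
    calc (𝒜.filter fun A => c A = p).card
        ≤ ((D p).powersetCard s).card := Finset.card_le_card hfsub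
      _ = Nat.choose (D p).card s := Finset.card_powersetCard _ _
      _ ≤ Nat.choose M s := Nat.choose_le_choose s (hA0p ▸ hDM A0 hA0)
  have hcardA : 𝒜.card = Nat.choose (T/2) s := by
    rw [h𝒜, Finset.card_powersetCard, Finset.card_range]
  have himg : (𝒜.image c).card ≤ P.ncard := by
    rw [Set.ncard_eq_toFinset_card P hPfin]
    apply Finset.card_le_card
    intro p hp
    obtain ⟨A, hA, rfl⟩ := Finset.mem_image.mp hp
    rw [Set.Finite.mem_toFinset]
    exact ⟨fc A, (hfcF A hA).1, rfl⟩
  set K := P.ncard with hK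
  have hchain : (T/2 + 1 - s)^s ≤ M^s * K := by
    calc (T/2 + 1 - s)^s ≤ Nat.descFactorial (T/2) s := Nat.pow_sub_le_descFactorial _ _
      _ = s.factorial * Nat.choose (T/2) s := Nat.descFactorial_eq_factorial_mul_choose _ _
      _ ≤ s.factorial * (Nat.choose M s * K) := by
          apply Nat.mul_le_mul_left
          calc Nat.choose (T/2) s = 𝒜.card := hcardA.symm
            _ ≤ Nat.choose M s * (𝒜.image c).card := hcount
            _ ≤ Nat.choose M s * K := Nat.mul_le_mul_left _ himg
      _ = (s.factorial * Nat.choose M s) * K := (mul_assoc _ _ _).symm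
      _ = Nat.descFactorial M s * K := by rw [Nat.descFactorial_eq_factorial_mul_choose]
      _ ≤ M^s * K := Nat.mul_le_mul_right _ (Nat.descFactorial_le_pow _ _)
  have hMr : (0:ℝ) < M := by exact_mod_cast hM
  have hTr : (T:ℝ) = 2 * ((T/2 : ℕ):ℝ) := by exact_mod_cast congrArg (Nat.cast (R := ℝ)) hT2
  have hstep : ((T:ℝ)/4) ≤ (((T/2 + 1 - s : ℕ)):ℝ) := by
    have hle : s ≤ T/2 + 1 := by omega
    have hcast : (((T/2 + 1 - s:ℕ)):ℝ) = ((T/2:ℕ):ℝ) + 1 - (s:ℝ) := by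
      push_cast [hle]; ring
    rw [hcast]
    have h4 : (4:ℝ) * s ≤ T := by exact_mod_cast h4s
    linarith
  have hfinal : ((T:ℝ)/4)^s ≤ (M:ℝ)^s * K := by
    calc ((T:ℝ)/4)^s ≤ (((T/2+1-s:ℕ)):ℝ)^s := pow_le_pow_left₀ (by positivity) hstep s
      _ = (((T/2+1-s)^s : ℕ) : ℝ) := by push_cast; ring
      _ ≤ ((M^s * K : ℕ):ℝ) := by exact_mod_cast hchain
      _ = (M:ℝ)^s * K := by push_cast; ring
  have hgoal : ((T:ℝ)/(4*M))^s ≤ (K:ℝ) := by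
    have heq : ((T:ℝ)/(4*M)) = (T/4)/M := by field_simp
    rw [heq, div_pow, div_le_iff₀ (by positivity)]
    linarith [hfinal]
  exact hgoal
end

section
/- There exists an absolute constant C > 0 with the following property. For every positive integers N and d, there is a vector of widths W (for the ReLU activation σ(x) = max(0,x)) with P(W) ≤ C(N + d) such that for any distinct points x_1,…,x_N ∈ ℝ^d and any values y_1,…,y_N ∈ ℝ, there exists f ∈ Υ^W(ℝ^d) with f(x_i) = y_i for all i = 1,…,N. -/
open MeasureTheory in


lemma exists_sep {N d : ℕ} (x : Fin N → Fin d → ℝ) (hx : Function.Injective x) :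
    ∃ v : Fin d → ℝ, Function.Injective (fun i => ∑ k, v k * x i k) := by
  classical
  set φ : (Fin d → ℝ) → (Fin d → ℝ) →ₗ[ℝ] ℝ := fun u =>
    { toFun := fun v => ∑ k, v k * u k
      map_add' := by intro a b; simp [add_mul, Finset.sum_add_distrib]
      map_smul' := by intro r a; simp [Finset.mul_sum, mul_assoc] }
  have key : ∀ i j : Fin N, i ≠ j →
      volume {v : Fin d → ℝ | ∑ k, v k * x i k = ∑ k, v k * x j k} = 0 := by
    intro i j hij
    have hu : x i - x j ≠ 0 := sub_ne_zero.mpr (fun h => hij (hx h))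
    have hker : LinearMap.ker (φ (x i - x j)) ≠ ⊤ := by
      intro h
      apply hu
      have h2 : φ (x i - x j) (x i - x j) = 0 := by
        have : x i - x j ∈ LinearMap.ker (φ (x i - x j)) := h ▸ Submodule.mem_top
        simpa using this
      have h3 : ∀ k ∈ Finset.univ, (0:ℝ) ≤ (x i - x j) k * (x i - x j) k :=
        fun k _ => mul_self_nonneg _
      have h4 := (Finset.sum_eq_zero_iff_of_nonneg h3).mp (by simpa [φ] using h2)
      funext k
      simpa [mul_self_eq_zero] using h4 k (Finset.mem_univ k)
    have := Measure.addHaar_submodule (volume)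
      (LinearMap.ker (φ (x i - x j))) hker
    convert this using 2
    ext v
    simp [φ, LinearMap.mem_ker, Pi.sub_apply, mul_sub, Finset.sum_sub_distrib, sub_eq_zero]
  set B : Set (Fin d → ℝ) :=
    ⋃ (i : Fin N) (j : Fin N) (_ : i ≠ j), {v | ∑ k, v k * x i k = ∑ k, v k * x j k}
  have hB : volume B = 0 := by
    refine measure_iUnion_null fun i => measure_iUnion_null fun j => measure_iUnion_null fun hij => ?_
    exact key i j hij
  have huniv : volume (Set.univ : Set (Fin d → ℝ)) ≠ 0 :=
    (isOpen_univ.measure_ne_zero volume Set.univ_nonempty)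
  have : B ≠ Set.univ := fun h => huniv (h ▸ hB)
  obtain ⟨v, hv⟩ : ∃ v, v ∉ B := by
    by_contra h
    push_neg at h
    exact this (Set.eq_univ_of_forall h)
  refine ⟨v, fun i j hij => ?_⟩
  by_contra hne
  exact hv (Set.mem_iUnion.mpr ⟨i, Set.mem_iUnion.mpr ⟨j, Set.mem_iUnion.mpr ⟨hne, hij⟩⟩⟩)


lemma interp1 : ∀ (n : ℕ) (S : Finset ℝ) (_ : S.card = n) (y : ℝ → ℝ),
    ∃ (a c : Fin n → ℝ) (b : ℝ), ∀ t ∈ S, (∑ j, a j * max 0 (t - c j)) + b = y t := by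
  intro n
  induction n with
  | zero =>
    intro S hS y
    exact ⟨![], ![], 0, by simp [Finset.card_eq_zero.mp hS]⟩
  | succ n ih =>
    intro S hS y
    have hne : S.Nonempty := Finset.card_pos.mp (by omega)
    set M := S.max' hne with hM
    set S' := S.erase M with hS'
    have hcard : S'.card = n := by
      rw [hS', Finset.card_erase_of_mem (S.max'_mem hne), hS]
      omega
    obtain ⟨a', c', b, hab⟩ := ih S' hcard y
    -- choose cutoff c0 strictly between max of S' and M
    have hex : ∃ c0 : ℝ, c0 < M ∧ ∀ t ∈ S', t ≤ c0 := by
      rcases S'.eq_empty_or_nonempty with h | h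
      · exact ⟨M - 1, by linarith, by simp [h]⟩
      · refine ⟨(S'.max' h + M) / 2, ?_, ?_⟩
        · have : S'.max' h < M := by
            have hmem := S'.max'_mem h
            have hle : S'.max' h ≤ M := S.le_max' _ (Finset.mem_of_mem_erase hmem)
            have hne2 : S'.max' h ≠ M := Finset.ne_of_mem_erase hmem
            exact lt_of_le_of_ne hle hne2
          linarith
        · intro t ht
          have h1 : t ≤ S'.max' h := S'.le_max' t ht
          have hmem := S'.max'_mem h
          have hle : S'.max' h ≤ M := S.le_max' _ (Finset.mem_of_mem_erase hmem)
          linarith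
    obtain ⟨c0, hc0M, hc0⟩ := hex
    set g : ℝ → ℝ := fun t => (∑ j, a' j * max 0 (t - c' j)) + b
    set anew : ℝ := (y M - g M) / (M - c0)
    refine ⟨Fin.cons anew a', Fin.cons c0 c', b, ?_⟩
    intro t ht
    rw [Fin.sum_univ_succ]
    rcases eq_or_ne t M with h | htM
    · subst h
      have h1 : max 0 (M - c0) = M - c0 := max_eq_right (by linarith)
      have h2 : anew * (M - c0) = y M - g M := by
        have hpos : M - c0 ≠ 0 := by intro hh; rw [sub_eq_zero] at hh; exact absurd hc0M (by simp [hh])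
        show (y M - g M) / (M - c0) * (M - c0) = _
        exact div_mul_cancel₀ _ hpos
      simp only [Fin.cons_succ, Fin.cons_zero, h1]
      have hg : (∑ j : Fin n, a' j * max 0 (M - c' j)) + b = g M := rfl
      linarith [h2]
    · have htS' : t ∈ S' := Finset.mem_erase.mpr ⟨htM, ht⟩
      have h1 : max 0 (t - c0) = 0 := max_eq_left (by linarith [hc0 t htS'])
      simp only [Fin.cons_succ, Fin.cons_zero, h1, mul_zero, zero_add]
      exact hab t htS'

/-- `O(N + d)` parameters always suffice for ReLU networks to interpolate
arbitrary values at arbitrary distinct points: there is an absolute constant `C` such that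
for all `N, d ≥ 1` there is a ReLU architecture `W` with `P(W) ≤ C(N + d)` interpolating any
data `(x_i, y_i)_{i=1}^N` with distinct `x_i ∈ ℝ^d`. -/
theorem relu_interpolation_linear_parameters :
    ∃ C : ℝ, 0 < C ∧
      ∀ (N d : ℕ), 0 < N → 0 < d →
      ∃ W : List ℕ, W ≠ [] ∧ (∀ w ∈ W, 0 < w) ∧
        (numParams d W : ℝ) ≤ C * ((N : ℝ) + (d : ℝ)) ∧
        ∀ x : Fin N → (Fin d → ℝ), Function.Injective x →
        ∀ y : Fin N → ℝ,
        ∃ f ∈ NNclass (fun t => max 0 t) d W, ∀ i, f (x i) = y i := by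
  classical
  refine ⟨5, by norm_num, fun N d hN hd => ⟨[1, N], by simp, ?_, ?_, ?_⟩⟩
  · intro w hw
    simp only [List.mem_cons, List.mem_singleton] at hw
    rcases hw with rfl | hw
    · norm_num
    · simp only [List.mem_cons, List.not_mem_nil, or_false] at hw
      omega
  · have hval : numParams d [1, N] = 3 * N + d + 2 := by
      simp [numParams, consecSum]
      ring
    rw [hval]
    have h1 : (1:ℝ) ≤ (N:ℝ) := by exact_mod_cast hN
    have h2 : (1:ℝ) ≤ (d:ℝ) := by exact_mod_cast hd
    push_cast
    linarith
  · intro x hx y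
    obtain ⟨v, hv⟩ := exists_sep x hx
    set t : Fin N → ℝ := fun i => ∑ k, v k * x i k with ht
    set β : ℝ := 1 + ∑ i, |t i| with hβ
    have hpos : ∀ i, 1 ≤ t i + β := by
      intro i
      have h1 : |t i| ≤ ∑ i', |t i'| :=
        Finset.single_le_sum (fun i' _ => abs_nonneg (t i')) (Finset.mem_univ i)
      have h2 : -(t i) ≤ |t i| := neg_le_abs _
      simp only [hβ]
      linarith
    set s : Fin N → ℝ := fun i => t i + β with hs
    have hs_inj : Function.Injective s := by
      intro i j hij
      apply hv
      simpa [hs] using hij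
    set S : Finset ℝ := Finset.univ.image s with hS
    have hcard : S.card = N := by
      rw [hS, Finset.card_image_of_injective _ hs_inj, Finset.card_univ, Fintype.card_fin]
    set Y : ℝ → ℝ := fun r => if h : ∃ i, s i = r then y h.choose else 0 with hY
    have hYs : ∀ i, Y (s i) = y i := by
      intro i
      have hex : ∃ i', s i' = s i := ⟨i, rfl⟩
      simp only [hY, dif_pos hex]
      exact congrArg y (hs_inj hex.choose_spec)
    obtain ⟨a, c, b, hab⟩ := interp1 N S hcard Y
    -- build the network
    set M0 : Matrix (Fin 1) (Fin d) ℝ := Matrix.of fun _ k => v k with hM0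
    set b0 : Fin 1 → ℝ := fun _ => β with hb0
    set M1 : Matrix (Fin N) (Fin 1) ℝ := Matrix.of fun _ _ => 1 with hM1
    set b1 : Fin N → ℝ := fun j => -(c j) with hb1
    set Mout : Matrix (Fin 1) (Fin N) ℝ := Matrix.of fun _ j => a j with hMout
    set σ : ℝ → ℝ := fun u => max 0 u with hσ
    set g : (Fin d → ℝ) → (Fin N → ℝ) := fun x0 =>
      id (fun j => σ (M1.mulVec (fun j0 => σ (M0.mulVec x0 j0 + b0 j0)) j + b1 j)) with hg
    refine ⟨fun x0 => Mout.mulVec (g x0) 0 + b, ⟨N, g, Mout, b, ?_, fun _ => rfl⟩, ?_⟩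
    · exact IsHidden.cons M0 b0 (IsHidden.cons M1 b1 (IsHidden.nil N))
    · intro i
      have h0 : ∀ j0 : Fin 1, σ (M0.mulVec (x i) j0 + b0 j0) = s i := by
        intro j0
        have : M0.mulVec (x i) j0 = t i := by
          simp [hM0, Matrix.mulVec, dotProduct, ht]
        rw [this]
        simp only [hb0, hσ, hs]
        exact max_eq_right (by linarith [hpos i])
      have h1 : ∀ j : Fin N, M1.mulVec (fun j0 => σ (M0.mulVec (x i) j0 + b0 j0)) j = s i := by
        intro j
        rw [show (fun j0 => σ (M0.mulVec (x i) j0 + b0 j0)) = fun _ => s i from funext h0]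
        simp [hM1, Matrix.mulVec, dotProduct, Fin.sum_univ_one]
      have hgx : g (x i) = fun j => max 0 (s i - c j) := by
        funext j
        simp only [hg, id_eq, h1]
        simp only [hb1, hσ]
        ring_nf
      have hmem : s i ∈ S := Finset.mem_image_of_mem s (Finset.mem_univ i)
      have := hab (s i) hmem
      rw [← hYs i, ← this]
      simp [hgx, hMout, Matrix.mulVec, dotProduct]
end
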